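/- For an alphabet of size q and the length-t word M cycling through the alphabet as a_1 a_2 ... a_q a_1 a_2 ..., the number of distinct subsequences x of M with tau(x) = t (i.e., x is a subsequence of M but not of its length-(t-1) prefix) equals the t-th q-bonacci number F_q(t), where F_q(t) = 2^{t-1} for 1 <= t <= q and F_q(t) = F_q(t-1) + ... + F_q(t-q) for t > q. -/

import Mathlib

open List Finset

/-- The `q`-bonacci numbers: `F_q(0)=1`, `F_q(t)=2^(t-1)` for `1 ≤ t ≤ q`,
and `F_q(t)` is the sum of the previous `q` terms for `t > q`. -/
def qbonacci (q : ℕ) : ℕ → ℕ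
  | 0 => 1
  | t + 1 =>
    if t + 1 ≤ q then 2 ^ t
    else ∑ i ∈ Finset.range q, qbonacci q (t - i)
  decreasing_by exact Nat.lt_succ_of_le (Nat.sub_le t i)

/-- The length-`t` word cycling through the alphabet `{0, 1, ..., q-1}`. -/
def cyc (q t : ℕ) : List ℕ := (List.range t).map (· % q)

/-- The alternating binary word `0,1,0,1,...` of length `t` (A=0, C=1). -/
def alt (t : ℕ) : List ℕ := (List.range t).map (· % 2)

/-- `tau q x` is the least `s` such that `x` is a subsequence of `cyc q s`. -/
noncomputable def tau (q : ℕ) (x : List ℕ) : ℕ := sInf {s | x <+ cyc q s}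

/-! ### Auxiliary lemmas -/

lemma cyc_succ (q n : ℕ) : cyc q (n + 1) = cyc q n ++ [n % q] := by
  simp [cyc, List.range_succ]

lemma cyc_add (q m k : ℕ) :
    cyc q (m + k) = cyc q m ++ (List.range k).map (fun j => (m + j) % q) := by
  simp [cyc, List.range_add, Function.comp]

lemma cyc_sublist (q : ℕ) {m n : ℕ} (h : m ≤ n) : cyc q m <+ cyc q n :=
  (List.range_sublist.mpr h).map _

/-- The distinct-subsequence finset of `cyc q m`. -/
def Sfin (q m : ℕ) : Finset (List ℕ) := (cyc q m).sublists.toFinset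

lemma mem_Sfin {q m : ℕ} {x : List ℕ} : x ∈ Sfin q m ↔ x <+ cyc q m := by
  simp [Sfin, List.mem_sublists]

lemma Sfin_mono {q m n : ℕ} (h : m ≤ n) : Sfin q m ⊆ Sfin q n := by
  intro x hx
  exact mem_Sfin.mpr ((mem_Sfin.mp hx).trans (cyc_sublist q h))

/-- The number of distinct subsequences of `cyc q m`. -/
def Dnum (q m : ℕ) : ℕ := (Sfin q m).card

lemma Dnum_mono {q m n : ℕ} (h : m ≤ n) : Dnum q m ≤ Dnum q n :=
  Finset.card_le_card (Sfin_mono h)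

lemma Dnum_small {q t : ℕ} (h : t ≤ q) : Dnum q t = 2 ^ t := by
  have hcyc : cyc q t = List.range t := by
    rw [cyc]
    have : ∀ a ∈ List.range t, a % q = id a := by
      intro a ha
      exact Nat.mod_eq_of_lt (lt_of_lt_of_le (List.mem_range.mp ha) h)
    rw [List.map_congr_left this, List.map_id]
  have hnd : (cyc q t).sublists.Nodup :=
    List.nodup_sublists.mpr (by rw [hcyc]; exact List.nodup_range)
  rw [Dnum, Sfin, List.toFinset_card_of_nodup hnd, List.length_sublists, hcyc,
    List.length_range]

lemma cons_sublist_of_notMem {a : ℕ} {l T M : List ℕ} (hT : a ∉ T)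
    (h : a :: l <+ T ++ M) : a :: l <+ M := by
  induction T with
  | nil => exact h
  | cons b T ih =>
    cases h with
    | cons _ h => exact ih (fun hm => hT (List.mem_cons_of_mem _ hm)) h
    | cons_cons _ h => exact absurd List.mem_cons_self hT

lemma concat_sublist_append {a : ℕ} {s M T : List ℕ} (hT : a ∉ T) :
    s ++ [a] <+ M ++ T ↔ s ++ [a] <+ M := by
  constructor
  · intro h
    rw [← List.reverse_sublist] at h ⊢
    simp only [List.reverse_append, List.reverse_singleton, List.singleton_append] at h ⊢
    exact cons_sublist_of_notMem (by simpa using hT) h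
  · intro h
    exact h.trans (List.sublist_append_left M T)

lemma concat_sublist_concat {a : ℕ} {s M : List ℕ} :
    s ++ [a] <+ M ++ [a] ↔ s <+ M := by
  rw [← List.reverse_sublist]
  simp only [List.reverse_append, List.reverse_singleton, List.singleton_append]
  rw [List.cons_sublist_cons, List.reverse_sublist]

/-- Key factorization: `s ++ [a] <+ cyc q n ↔ s <+ cyc q (n - q)` when `q ≤ n`,
where `a = n % q`. -/
lemma concat_sublist_cyc {q n : ℕ} (hq : 1 ≤ q) (hn : q ≤ n) {s : List ℕ} :
    s ++ [n % q] <+ cyc q n ↔ s <+ cyc q (n - q) := by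
  obtain ⟨m, rfl⟩ : ∃ m, n = m + q := ⟨n - q, by omega⟩
  have ha : (m + q) % q = m % q := Nat.add_mod_right m q
  have hdec : cyc q (m + q) = cyc q (m + 1) ++ (List.range (q - 1)).map
      (fun j => (m + 1 + j) % q) := by
    have : m + q = (m + 1) + (q - 1) := by omega
    rw [this, cyc_add]
  have hnotmem : m % q ∉ (List.range (q - 1)).map (fun j => (m + 1 + j) % q) := by
    simp only [List.mem_map, List.mem_range, not_exists, not_and]
    intro j hj
    have h1 : (m + 1 + j) % q = (m % q + (1 + j)) % q := by
      conv_lhs => rw [show m + 1 + j = m + (1 + j) by ring, Nat.add_mod]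
      rw [Nat.mod_eq_of_lt (show 1 + j < q by omega)]
    have h2 : m % q < q := Nat.mod_lt _ hq
    rw [h1]
    rcases lt_or_ge (m % q + (1 + j)) q with hlt | hge
    · rw [Nat.mod_eq_of_lt hlt]; omega
    · rw [Nat.mod_eq_sub_mod hge, Nat.mod_eq_of_lt (by omega)]; omega
  rw [ha, hdec, concat_sublist_append hnotmem, cyc_succ, concat_sublist_concat]
  simp

lemma step {q n : ℕ} (hq : 1 ≤ q) (hn : q ≤ n) :
    (Sfin q n \ Sfin q (n - q)).card = (Sfin q (n + 1) \ Sfin q n).card := by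
  refine Finset.card_bij (fun x _ => x ++ [n % q]) ?_ ?_ ?_
  · intro x hx
    rw [Finset.mem_sdiff, mem_Sfin, mem_Sfin] at hx ⊢
    constructor
    · rw [cyc_succ, concat_sublist_concat]; exact hx.1
    · rw [concat_sublist_cyc hq hn]; exact hx.2
  · intro x₁ _ x₂ _ h
    exact List.append_cancel_right h
  · intro y hy
    rw [Finset.mem_sdiff, mem_Sfin, mem_Sfin, cyc_succ] at hy
    obtain ⟨h1, h2⟩ := hy
    obtain ⟨l₁, l₂, rfl, hl₁, hl₂⟩ := List.sublist_append_iff.mp h1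
    rcases List.sublist_singleton.mp hl₂ with rfl | rfl
    · exact absurd (by simpa using hl₁) h2
    · refine ⟨l₁, ?_, rfl⟩
      rw [Finset.mem_sdiff, mem_Sfin, mem_Sfin]
      refine ⟨hl₁, fun hc => h2 ?_⟩
      have : l₁ ++ [n % q] <+ cyc q n := (concat_sublist_cyc hq hn).mpr hc
      exact this

lemma telescope (f : ℕ → ℕ) (hf : Monotone f) :
    ∀ k n, k ≤ n → ∑ i ∈ Finset.range k, (f (n - i) - f (n - i - 1)) = f n - f (n - k) := by
  intro k
  induction k with
  | zero => simp
  | succ k ih =>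
    intro n hkn
    rw [Finset.sum_range_succ, ih n (by omega)]
    have h1 := hf (show n - k ≤ n by omega)
    have h2 := hf (show n - k - 1 ≤ n - k by omega)
    rw [show n - (k + 1) = n - k - 1 from by omega]
    omega

lemma main_aux (q : ℕ) (hq : 1 ≤ q) :
    ∀ t, 1 ≤ t → Dnum q t - Dnum q (t - 1) = qbonacci q t := by
  intro t
  induction t using Nat.strong_induction_on with
  | _ t ih =>
    intro ht
    obtain ⟨n, rfl⟩ : ∃ n, t = n + 1 := ⟨t - 1, by omega⟩
    simp only [Nat.add_sub_cancel]
    rw [qbonacci]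
    by_cases hcase : n + 1 ≤ q
    · rw [if_pos hcase, Dnum_small hcase, Dnum_small (by omega)]
      have : 2 ^ (n + 1) = 2 * 2 ^ n := by ring
      omega
    · rw [if_neg hcase]
      have hqn : q ≤ n := by omega
      have e1 : Dnum q (n + 1) - Dnum q n = (Sfin q (n + 1) \ Sfin q n).card := by
        rw [Finset.card_sdiff_of_subset (Sfin_mono (by omega))]; rfl
      have e2 : (Sfin q n \ Sfin q (n - q)).card = Dnum q n - Dnum q (n - q) := by
        rw [Finset.card_sdiff_of_subset (Sfin_mono (by omega))]; rfl
      rw [e1, ← step hq hqn, e2,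
        ← telescope (Dnum q) (fun _ _ h => Dnum_mono h) q n hqn]
      refine Finset.sum_congr rfl ?_
      intro i hi
      rw [Finset.mem_range] at hi
      have := ih (n - i) (by omega) (by omega)
      rw [show n - i - 1 = (n - i) - 1 from rfl] at this
      exact this

theorem stmt2 (q t : ℕ) (hq : 1 ≤ q) (ht : 1 ≤ t) :
    {x : List ℕ | x <+ cyc q t ∧ ¬ x <+ cyc q (t - 1)}.ncard = qbonacci q t := by
  have hset : {x : List ℕ | x <+ cyc q t ∧ ¬ x <+ cyc q (t - 1)}
      = ↑(Sfin q t \ Sfin q (t - 1)) := by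
    ext x
    simp [mem_Sfin, Finset.mem_sdiff, Set.mem_setOf_eq]
  rw [hset, Set.ncard_coe_finset, Finset.card_sdiff_of_subset (Sfin_mono (by omega))]
  exact main_aux q hq t ht
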